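/- Let β ≥ 0 and let z ∈ L^∞(ℝ) be nonnegative. Define A_z : ℝ → ℝ by A_z(x) = ∫_ℝ J(x−y)( z(x)·z(y)^β − (β/(β+1))·z(y)^{β+1} − (1/(β+1))·z(x)^{β+1} ) dy. Then A_z(x) ≤ 0 for every x ∈ ℝ, and for every bounded continuous function w : ℝ → ℝ that attains its global maximum at a point x₀ ∈ ℝ, one has z(x₀)·L(z^β w)(x₀) − (β/(β+1))·w(x₀)·L(z^{β+1})(x₀) ≤ A_z(x₀)·w(x₀). -/

import Mathlib

open MeasureTheory Filter

/-- The nonlocal operator `(Lu)(x) = ∫ J(x-y) (u(y) - u(x)) dy`. -/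
noncomputable def nlOp (J u : ℝ → ℝ) (x : ℝ) : ℝ := ∫ y, J (x - y) * (u y - u x)

/-- The function `A_z` associated to the kernel `J`, the function `z` and the exponent `β`. -/
noncomputable def Az (J z : ℝ → ℝ) (β : ℝ) (x : ℝ) : ℝ :=
  ∫ y, J (x - y) *
    (z x * z y ^ β - (β / (β + 1)) * z y ^ (β + 1) - (1 / (β + 1)) * z x ^ (β + 1))

/-- Young-type inequality: `a * b^β ≤ (β/(β+1)) b^(β+1) + (1/(β+1)) a^(β+1)`. -/
lemma young_aux (β a b : ℝ) (hβ : 0 ≤ β) (ha : 0 ≤ a) (hb : 0 ≤ b) :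
    a * b ^ β ≤ (β / (β + 1)) * b ^ (β + 1) + (1 / (β + 1)) * a ^ (β + 1) := by
  have h1 : (0:ℝ) < β + 1 := by linarith
  have hw : (1 / (β + 1)) + (β / (β + 1)) = 1 := by field_simp; ring
  have h := Real.geom_mean_le_arith_mean2_weighted
    (by positivity : (0:ℝ) ≤ 1 / (β + 1)) (by positivity : (0:ℝ) ≤ β / (β + 1))
    (by positivity : (0:ℝ) ≤ a ^ (β + 1)) (by positivity : (0:ℝ) ≤ b ^ (β + 1)) hw
  rw [← Real.rpow_mul ha, ← Real.rpow_mul hb] at h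
  have e1 : (β + 1) * (1 / (β + 1)) = 1 := by field_simp
  have e2 : (β + 1) * (β / (β + 1)) = β := by field_simp
  rw [e1, e2, Real.rpow_one] at h
  linarith

/-- `t * t^β = t^(β+1)` for `t ≥ 0`, `β ≥ 0`. -/
lemma rpow_succ_aux (β t : ℝ) (hβ : 0 ≤ β) (ht : 0 ≤ t) :
    t * t ^ β = t ^ (β + 1) := by
  rcases eq_or_lt_of_le ht with h | h
  · rw [← h, Real.zero_rpow (by positivity : β + 1 ≠ 0), zero_mul]
  · rw [Real.rpow_add h, Real.rpow_one]; ring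

lemma intJmul (J : ℝ → ℝ) (hJint : Integrable J) (x₀ : ℝ) (h : ℝ → ℝ)
    (hm : AEStronglyMeasurable h volume) (C : ℝ) (hb : ∀ y, |h y| ≤ C) :
    Integrable (fun y => J (x₀ - y) * h y) := by
  have hJ' : Integrable (fun y => J (x₀ - y)) := hJint.comp_sub_left x₀
  have := hJ'.bdd_mul hm (c := C) (Filter.Eventually.of_forall (by simpa [Real.norm_eq_abs] using hb))
  simpa [mul_comm] using this

theorem stmt0
    (J : ℝ → ℝ) (hJpos : ∀ x, 0 ≤ J x) (hJeven : ∀ x, J (-x) = J x)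
    (hJint : Integrable J) (hJmass : ∫ x, J x = 1)
    (β : ℝ) (hβ : 0 ≤ β)
    (z : ℝ → ℝ) (hzmeas : Measurable z) (hzbdd : ∃ C, ∀ x, z x ≤ C)
    (hznonneg : ∀ x, 0 ≤ z x) :
    (∀ x, Az J z β x ≤ 0) ∧
    (∀ (w : ℝ → ℝ) (x₀ : ℝ), Continuous w → (∃ C, ∀ x, |w x| ≤ C) →
      (∀ x, w x ≤ w x₀) →
      z x₀ * nlOp J (fun y => z y ^ β * w y) x₀
          - (β / (β + 1)) * w x₀ * nlOp J (fun y => z y ^ (β + 1)) x₀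
        ≤ Az J z β x₀ * w x₀) := by
  obtain ⟨Cz, hCz⟩ := hzbdd
  have hCz0 : 0 ≤ Cz := le_trans (hznonneg 0) (hCz 0)
  have hβ1 : (0:ℝ) < β + 1 := by linarith
  -- the integrand of Az is pointwise nonpositive
  have hGnonpos : ∀ x y,
      z x * z y ^ β - (β / (β + 1)) * z y ^ (β + 1) - (1 / (β + 1)) * z x ^ (β + 1) ≤ 0 := by
    intro x y
    have := young_aux β (z x) (z y) hβ (hznonneg x) (hznonneg y)
    linarith
  have hAz : ∀ x, Az J z β x ≤ 0 := by
    intro x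
    apply integral_nonpos
    intro y
    exact mul_nonpos_of_nonneg_of_nonpos (hJpos _) (hGnonpos x y)
  refine ⟨hAz, ?_⟩
  intro w x₀ hwcont hwbdd hwmax
  obtain ⟨Cw, hCw⟩ := hwbdd
  have hCw0 : 0 ≤ Cw := le_trans (abs_nonneg _) (hCw 0)
  -- bounds on powers of z
  have hzb : ∀ y, |z y ^ β| ≤ Cz ^ β := fun y => by
    rw [abs_of_nonneg (Real.rpow_nonneg (hznonneg y) β)]
    exact Real.rpow_le_rpow (hznonneg y) (hCz y) hβ
  have hzb1 : ∀ y, |z y ^ (β + 1)| ≤ Cz ^ (β + 1) := fun y => by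
    rw [abs_of_nonneg (Real.rpow_nonneg (hznonneg y) _)]
    exact Real.rpow_le_rpow (hznonneg y) (hCz y) (by linarith)
  -- measurability
  have hmzβ : Measurable (fun y => z y ^ β) :=
    (Real.continuous_rpow_const hβ).measurable.comp hzmeas
  have hmzβ1 : Measurable (fun y => z y ^ (β + 1)) :=
    (Real.continuous_rpow_const (by linarith : (0:ℝ) ≤ β + 1)).measurable.comp hzmeas
  -- integrability of all relevant integrands
  have hI1 : Integrable (fun y => J (x₀ - y) * (z y ^ β * w y - z x₀ ^ β * w x₀)) := by
    apply intJmul J hJint x₀ _ ((hmzβ.mul hwcont.measurable).aestronglyMeasurable.sub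
      aestronglyMeasurable_const) (Cz ^ β * Cw + Cz ^ β * Cw)
    intro y
    have h1 : |z y ^ β * w y| ≤ Cz ^ β * Cw := by
      rw [abs_mul]
      exact mul_le_mul (hzb y) (hCw y) (abs_nonneg _) (le_trans (abs_nonneg _) (hzb y))
    have h2 : |z x₀ ^ β * w x₀| ≤ Cz ^ β * Cw := by
      rw [abs_mul]
      exact mul_le_mul (hzb x₀) (hCw x₀) (abs_nonneg _) (le_trans (abs_nonneg _) (hzb x₀))
    calc |z y ^ β * w y - z x₀ ^ β * w x₀| ≤ |z y ^ β * w y| + |z x₀ ^ β * w x₀| :=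
          abs_sub _ _
      _ ≤ Cz ^ β * Cw + Cz ^ β * Cw := add_le_add h1 h2
  have hI2 : Integrable (fun y => J (x₀ - y) * (z y ^ (β + 1) - z x₀ ^ (β + 1))) := by
    apply intJmul J hJint x₀ _ (hmzβ1.aestronglyMeasurable.sub aestronglyMeasurable_const)
      (Cz ^ (β + 1) + Cz ^ (β + 1))
    intro y
    calc |z y ^ (β + 1) - z x₀ ^ (β + 1)| ≤ |z y ^ (β + 1)| + |z x₀ ^ (β + 1)| := abs_sub _ _
      _ ≤ Cz ^ (β + 1) + Cz ^ (β + 1) := add_le_add (hzb1 y) (hzb1 x₀)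
  have hI3 : Integrable (fun y => J (x₀ - y) *
      (z x₀ * z y ^ β - (β / (β + 1)) * z y ^ (β + 1) - (1 / (β + 1)) * z x₀ ^ (β + 1))) := by
    apply intJmul J hJint x₀ _
      (((aestronglyMeasurable_const.mul hmzβ.aestronglyMeasurable).sub
        (aestronglyMeasurable_const.mul hmzβ1.aestronglyMeasurable)).sub
        aestronglyMeasurable_const)
      (Cz * Cz ^ β + Cz ^ (β + 1) + Cz ^ (β + 1))
    intro y
    have hc1 : β / (β + 1) ≤ 1 := by
      rw [div_le_one hβ1]; linarith
    have hc2 : 1 / (β + 1) ≤ 1 := by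
      rw [div_le_one hβ1]; linarith
    have hc1' : 0 ≤ β / (β + 1) := by positivity
    have hc2' : 0 ≤ 1 / (β + 1) := by positivity
    have h1 : |z x₀ * z y ^ β| ≤ Cz * Cz ^ β := by
      rw [abs_mul, abs_of_nonneg (hznonneg x₀)]
      exact mul_le_mul (hCz x₀) (hzb y) (abs_nonneg _) hCz0
    have h2 : |(β / (β + 1)) * z y ^ (β + 1)| ≤ Cz ^ (β + 1) := by
      rw [abs_mul, abs_of_nonneg hc1']
      calc β / (β + 1) * |z y ^ (β + 1)| ≤ 1 * |z y ^ (β + 1)| :=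
            mul_le_mul_of_nonneg_right hc1 (abs_nonneg _)
        _ = |z y ^ (β + 1)| := one_mul _
        _ ≤ Cz ^ (β + 1) := hzb1 y
    have h3 : |(1 / (β + 1)) * z x₀ ^ (β + 1)| ≤ Cz ^ (β + 1) := by
      rw [abs_mul, abs_of_nonneg hc2']
      calc 1 / (β + 1) * |z x₀ ^ (β + 1)| ≤ 1 * |z x₀ ^ (β + 1)| :=
            mul_le_mul_of_nonneg_right hc2 (abs_nonneg _)
        _ = |z x₀ ^ (β + 1)| := one_mul _
        _ ≤ Cz ^ (β + 1) := hzb1 x₀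
    calc |z x₀ * z y ^ β - (β / (β + 1)) * z y ^ (β + 1) - (1 / (β + 1)) * z x₀ ^ (β + 1)|
        ≤ |z x₀ * z y ^ β - (β / (β + 1)) * z y ^ (β + 1)| + |(1 / (β + 1)) * z x₀ ^ (β + 1)| :=
          abs_sub _ _
      _ ≤ (|z x₀ * z y ^ β| + |(β / (β + 1)) * z y ^ (β + 1)|) + |(1 / (β + 1)) * z x₀ ^ (β + 1)| :=
          add_le_add_left (abs_sub _ _) _
      _ ≤ Cz * Cz ^ β + Cz ^ (β + 1) + Cz ^ (β + 1) := by
          exact add_le_add (add_le_add h1 h2) h3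
  have hI3' : Integrable (fun y => J (x₀ - y) *
      (z x₀ * z y ^ β - (β / (β + 1)) * z y ^ (β + 1) - (1 / (β + 1)) * z x₀ ^ (β + 1)) * w x₀) :=
    hI3.mul_const _
  -- pointwise key inequality
  have key : ∀ y,
      z x₀ * (J (x₀ - y) * (z y ^ β * w y - z x₀ ^ β * w x₀))
        - (β / (β + 1)) * w x₀ * (J (x₀ - y) * (z y ^ (β + 1) - z x₀ ^ (β + 1)))
      ≤ J (x₀ - y) *
          (z x₀ * z y ^ β - (β / (β + 1)) * z y ^ (β + 1) - (1 / (β + 1)) * z x₀ ^ (β + 1))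
        * w x₀ := by
    intro y
    have ht : z x₀ * z x₀ ^ β = z x₀ ^ (β + 1) := rpow_succ_aux β (z x₀) hβ (hznonneg x₀)
    have hinner :
        z x₀ * (z y ^ β * w y - z x₀ ^ β * w x₀)
          - (β / (β + 1)) * w x₀ * (z y ^ (β + 1) - z x₀ ^ (β + 1))
        ≤ (z x₀ * z y ^ β - (β / (β + 1)) * z y ^ (β + 1) - (1 / (β + 1)) * z x₀ ^ (β + 1))
            * w x₀ := by
      have hprod : z x₀ * z y ^ β * (w y - w x₀) ≤ 0 :=
        mul_nonpos_of_nonneg_of_nonpos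
          (mul_nonneg (hznonneg x₀) (Real.rpow_nonneg (hznonneg y) β))
          (by linarith [hwmax y])
      have hid :
          z x₀ * (z y ^ β * w y - z x₀ ^ β * w x₀)
            - (β / (β + 1)) * w x₀ * (z y ^ (β + 1) - z x₀ ^ (β + 1))
          - (z x₀ * z y ^ β - (β / (β + 1)) * z y ^ (β + 1) - (1 / (β + 1)) * z x₀ ^ (β + 1))
              * w x₀
          = z x₀ * z y ^ β * (w y - w x₀) := by
        rw [← ht]
        field_simp
        ring
      linarith
    have := mul_le_mul_of_nonneg_left hinner (hJpos (x₀ - y))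
    nlinarith [this]
  -- assemble
  have step : z x₀ * nlOp J (fun y => z y ^ β * w y) x₀
      - (β / (β + 1)) * w x₀ * nlOp J (fun y => z y ^ (β + 1)) x₀
      = ∫ y, (z x₀ * (J (x₀ - y) * (z y ^ β * w y - z x₀ ^ β * w x₀))
          - (β / (β + 1)) * w x₀ * (J (x₀ - y) * (z y ^ (β + 1) - z x₀ ^ (β + 1)))) := by
    rw [nlOp, nlOp, ← integral_const_mul, ← integral_const_mul,
      ← integral_sub (hI1.const_mul _) (hI2.const_mul _)]
  have step2 : Az J z β x₀ * w x₀
      = ∫ y, J (x₀ - y) *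
          (z x₀ * z y ^ β - (β / (β + 1)) * z y ^ (β + 1) - (1 / (β + 1)) * z x₀ ^ (β + 1))
        * w x₀ := by
    rw [Az, ← integral_mul_const]
  rw [step, step2]
  exact integral_mono ((hI1.const_mul _).sub (hI2.const_mul _)) hI3' key
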